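/- For any effect signature E and any type X, the map ĉ : D → S̄_E(X) is a well-defined order isomorphism: every value of ĉ is a costrategy, ĉ is bijective, and for all d, d' ∈ D one has d ≤ d' if and only if ĉ d ⊆ ĉ d'. -/
import Mathlib


universe u v w

/-- Coplays over an effect signature `(E, ar)` with results in `X`. -/
inductive Coplay (E : Type u) (ar : E → Type v) (X : Type w) : Type (max u v w)
  | ret : X → Coplay E ar X
  | op : E → Coplay E ar X
  | cons : (m : E) → ar m → Coplay E ar X → Coplay E ar X

/-- The prefix relation `⊑` on coplays. -/
inductive Coplay.Prefix {E : Type u} {ar : E → Type v} {X : Type w} :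
    Coplay E ar X → Coplay E ar X → Prop
  | ret (x : X) : Coplay.Prefix (.ret x) (.ret x)
  | op (m : E) : Coplay.Prefix (.op m) (.op m)
  | op_cons (m : E) (n : ar m) (t : Coplay E ar X) :
      Coplay.Prefix (.op m) (.cons m n t)
  | cons (m : E) (n : ar m) {s t : Coplay E ar X} :
      Coplay.Prefix s t → Coplay.Prefix (.cons m n s) (.cons m n t)

/-- The coherence relation `☡` on coplays. -/
inductive Coplay.Coh {E : Type u} {ar : E → Type v} {X : Type w} :
    Coplay E ar X → Coplay E ar X → Prop
  | ret (x : X) : Coplay.Coh (.ret x) (.ret x)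
  | op (m : E) : Coplay.Coh (.op m) (.op m)
  | op_cons (m : E) (n : ar m) (s : Coplay E ar X) :
      Coplay.Coh (.op m) (.cons m n s)
  | cons (m : E) (n₁ n₂ : ar m) (s₁ s₂ : Coplay E ar X) :
      (n₁ = n₂ → Coplay.Coh s₁ s₂) → Coplay.Coh (.cons m n₁ s₁) (.cons m n₂ s₂)

/-- A costrategy: a set of coplays, downward closed under the prefix relation
and pairwise coherent. -/
def IsCostrategy {E : Type u} {ar : E → Type v} {X : Type w}
    (σ : Set (Coplay E ar X)) : Prop :=
  (∀ s t : Coplay E ar X, Coplay.Prefix s t → t ∈ σ → s ∈ σ) ∧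
  (∀ s ∈ σ, ∀ t ∈ σ, Coplay.Coh s t ∨ Coplay.Coh t s)

/-- The domain `D = Option ((Σ m : E, (ar m → S̄_E(X))) ⊕ X)`. -/
def DType (E : Type u) (ar : E → Type v) (X : Type w) :=
  Option ((Σ m : E, (ar m → {σ : Set (Coplay E ar X) // IsCostrategy σ})) ⊕ X)

/-- The order on `D`. -/
inductive DLE {E : Type u} {ar : E → Type v} {X : Type w} :
    DType E ar X → DType E ar X → Prop
  | bot (d : DType E ar X) : DLE none d
  | inl (m : E) (f f' : ar m → {σ : Set (Coplay E ar X) // IsCostrategy σ}) :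
      (∀ n, (f n).1 ⊆ (f' n).1) → DLE (some (Sum.inl ⟨m, f⟩)) (some (Sum.inl ⟨m, f'⟩))
  | inr (x : X) : DLE (some (Sum.inr x)) (some (Sum.inr x))

/-- The map `ĉ : D → Set (Coplay E ar X)`. -/
def chat {E : Type u} {ar : E → Type v} {X : Type w} :
    DType E ar X → Set (Coplay E ar X)
  | none => ∅
  | some (Sum.inl ⟨m, f⟩) =>
      {Coplay.op m} ∪
        {s | ∃ (n : ar m) (u : Coplay E ar X), u ∈ (f n).1 ∧ s = Coplay.cons m n u}
  | some (Sum.inr x) => {Coplay.ret x}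


section Aux
variable {E : Type u} {ar : E → Type v} {X : Type w}

lemma coh_ret_left {x : X} {t : Coplay E ar X} (h : Coplay.Coh (.ret x) t) :
    t = .ret x := by cases h; rfl

lemma coh_ret_right {x : X} {t : Coplay E ar X} (h : Coplay.Coh t (.ret x)) :
    t = .ret x := by cases h; rfl

lemma coh_op_right {m : E} {t : Coplay E ar X} (h : Coplay.Coh t (.op m)) :
    t = .op m := by cases h; rfl

lemma chat_isCostrategy (d : DType E ar X) : IsCostrategy (chat d) := by
  match d with
  | none => exact ⟨fun s t _ ht => ht.elim, fun s hs => hs.elim⟩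
  | some (Sum.inr x) =>
    refine ⟨?_, ?_⟩
    · rintro s t hst ht
      have ht' : t = Coplay.ret x := ht
      subst ht'; cases hst; rfl
    · rintro s hs t ht
      have hs' : s = Coplay.ret x := hs
      have ht' : t = Coplay.ret x := ht
      subst hs'; subst ht'
      exact Or.inl (Coplay.Coh.ret x)
  | some (Sum.inl ⟨m, f⟩) =>
    refine ⟨?_, ?_⟩
    · rintro s t hst (ht | ⟨n, u, hu, rfl⟩)
      · rw [Set.mem_singleton_iff] at ht; subst ht
        cases hst; exact Or.inl rfl
      · cases hst with
        | op_cons => exact Or.inl rfl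
        | cons _ _ hst' =>
          exact Or.inr ⟨n, _, (f n).2.1 _ _ hst' hu, rfl⟩
    · rintro s (hs | ⟨n₁, u₁, hu₁, rfl⟩) t (ht | ⟨n₂, u₂, hu₂, rfl⟩)
      · rw [Set.mem_singleton_iff] at hs ht; subst hs; subst ht
        exact Or.inl (Coplay.Coh.op m)
      · rw [Set.mem_singleton_iff] at hs; subst hs
        exact Or.inl (Coplay.Coh.op_cons m n₂ u₂)
      · rw [Set.mem_singleton_iff] at ht; subst ht
        exact Or.inr (Coplay.Coh.op_cons m n₁ u₁)
      · by_cases hn : n₁ = n₂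
        · subst hn
          rcases (f n₁).2.2 u₁ hu₁ u₂ hu₂ with h | h
          · exact Or.inl (Coplay.Coh.cons m n₁ n₁ u₁ u₂ (fun _ => h))
          · exact Or.inr (Coplay.Coh.cons m n₁ n₁ u₂ u₁ (fun _ => h))
        · exact Or.inl (Coplay.Coh.cons m n₁ n₂ u₁ u₂ (fun h => absurd h hn))

lemma dle_iff_subset (d d' : DType E ar X) : DLE d d' ↔ chat d ⊆ chat d' := by
  constructor
  · intro h
    cases h with
    | bot d' => intro s hs; exact hs.elim
    | inl m f f' hf =>
      rintro s (hs | ⟨n, u, hu, rfl⟩)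
      · exact Or.inl hs
      · exact Or.inr ⟨n, u, hf n hu, rfl⟩
    | inr x => exact subset_rfl
  · intro h
    match d, d' with
    | none, d' => exact DLE.bot d'
    | some (Sum.inr x), d' =>
      have hr : Coplay.ret x ∈ chat d' := h rfl
      match d' with
      | none => exact hr.elim
      | some (Sum.inr x') =>
        rw [show chat (some (Sum.inr x')) = {Coplay.ret x'} from rfl,
          Set.mem_singleton_iff] at hr
        cases hr; exact DLE.inr x
      | some (Sum.inl ⟨m', f'⟩) =>
        rcases hr with hr | ⟨n, u, hu, hr⟩
        · cases hr
        · cases hr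
    | some (Sum.inl ⟨m, f⟩), d' =>
      have hop : Coplay.op m ∈ chat d' := h (Or.inl rfl)
      match d' with
      | none => exact hop.elim
      | some (Sum.inr x') =>
        rw [show chat (some (Sum.inr x')) = {Coplay.ret x'} from rfl,
          Set.mem_singleton_iff] at hop
        cases hop
      | some (Sum.inl ⟨m', f'⟩) =>
        rcases hop with hop | ⟨n, u, hu, hop⟩
        · rw [Set.mem_singleton_iff] at hop
          cases hop
          refine DLE.inl m f f' (fun n u hu => ?_)
          have : Coplay.cons m n u ∈ chat (some (Sum.inl ⟨m, f'⟩)) :=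
            h (Or.inr ⟨n, u, hu, rfl⟩)
          rcases this with hc | ⟨n', u', hu', hc⟩
          · cases hc
          · obtain ⟨_, hn, hu''⟩ := Coplay.cons.inj hc
            cases eq_of_heq hn; cases hu''
            exact hu'
        · cases hop

lemma chat_surjective (σ : Set (Coplay E ar X)) (hσ : IsCostrategy σ) :
    ∃ d : DType E ar X, chat d = σ := by
  obtain ⟨hdown, hcoh⟩ := hσ
  rcases Set.eq_empty_or_nonempty σ with rfl | ⟨s₀, hs₀⟩
  · exact ⟨none, rfl⟩
  have hmain : ∀ m : E, Coplay.op m ∈ σ → ∃ d : DType E ar X, chat d = σ := by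
    intro m hop
    have hf : ∀ n : ar m, IsCostrategy {u | Coplay.cons m n u ∈ σ} := by
      intro n
      refine ⟨fun u u' huu' hu' => hdown _ _ (Coplay.Prefix.cons m n huu') hu', ?_⟩
      intro u hu u' hu'
      rcases hcoh _ hu _ hu' with hc | hc
      · cases hc with
        | cons _ _ _ _ _ hk => exact Or.inl (hk rfl)
      · cases hc with
        | cons _ _ _ _ _ hk => exact Or.inr (hk rfl)
    refine ⟨some (Sum.inl ⟨m, fun n => ⟨_, hf n⟩⟩), ?_⟩
    apply Set.eq_of_subset_of_subset
    · rintro s (hs | ⟨n, u, hu, rfl⟩)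
      · rw [Set.mem_singleton_iff] at hs; subst hs; exact hop
      · exact hu
    · intro t ht
      rcases hcoh _ ht _ hop with hc | hc
      · rw [coh_op_right hc]; exact Or.inl rfl
      · cases hc with
        | op => exact Or.inl rfl
        | op_cons _ n s => exact Or.inr ⟨n, s, ht, rfl⟩
  match s₀, hs₀ with
  | Coplay.ret x, hs₀ =>
    refine ⟨some (Sum.inr x), Set.eq_of_subset_of_subset ?_ ?_⟩
    · intro t ht
      rw [show chat (some (Sum.inr x)) = {Coplay.ret x} from rfl,
        Set.mem_singleton_iff] at ht
      subst ht; exact hs₀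
    · intro t ht
      rcases hcoh _ ht _ hs₀ with hc | hc
      · rw [coh_ret_right hc]; rfl
      · rw [coh_ret_left hc]; rfl
  | Coplay.op m, hs₀ => exact hmain m hs₀
  | Coplay.cons m n u, hs₀ =>
    exact hmain m (hdown _ _ (Coplay.Prefix.op_cons m n u) hs₀)

end Aux

/-- `ĉ` is a well-defined order isomorphism onto `S̄_E(X)`. -/
theorem chat_orderIso (E : Type u) (ar : E → Type v) (X : Type w) :
    (∀ d : DType E ar X, IsCostrategy (chat d)) ∧
    (∀ d d' : DType E ar X, chat d = chat d' → d = d') ∧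
    (∀ σ : Set (Coplay E ar X), IsCostrategy σ → ∃ d : DType E ar X, chat d = σ) ∧
    (∀ d d' : DType E ar X, DLE d d' ↔ chat d ⊆ chat d') := by
  refine ⟨chat_isCostrategy, ?_, chat_surjective, dle_iff_subset⟩
  intro d d' hdd'
  have h1 : DLE d d' := (dle_iff_subset d d').2 (le_of_eq hdd')
  have h2 : DLE d' d := (dle_iff_subset d' d).2 (le_of_eq hdd'.symm)
  cases h1 with
  | bot => cases h2 with | bot => rfl
  | inl m f f' hf =>
    cases h2 with
    | inl _ _ _ hf' =>
      have : f = f' := funext fun n =>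
        Subtype.ext (Set.eq_of_subset_of_subset (hf n) (hf' n))
      rw [this]
  | inr x => rfl
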